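/- Success probability of the pretty good measurement as a collision relative entropy (equation (succ), due to Beigi–Gohari and used in the proof of Proposition 1): Let M ≥ 1 be a natural number and let ρ_m be a density matrix on ι for each m ∈ Fin M. Set S := Σ_m ρ_m, and define the pretty good measurement Λ_m := S^(−1/2) * ρ_m * S^(−1/2) (Moore–Penrose powers). Define σ_MB := (1/M) • Σ_m (Matrix.stdBasisMatrix m m 1 ⊗ₖ ρ_m) on Fin M × ι, σ_M := (1/M : ℂ) • (1 : Matrix (Fin M) (Fin M) ℂ), and σ_B := (1/M) • S. Then the average success probability satisfies (1/M) · Σ_m Re(Tr(Λ_m * ρ_m)) = (1/M) · 2^{D₂(σ_MB ‖ σ_M ⊗ₖ σ_B)}. -/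

import Mathlib

open Matrix
open scoped ComplexOrder Kronecker

set_option linter.unusedSectionVars false
set_option linter.unusedVariables false
set_option maxHeartbeats 1000000

variable {ι : Type*} [Fintype ι] [DecidableEq ι]

/-- The `j`-th eigenvector (column of the eigenvector unitary) of a matrix,
via its spectral decomposition; junk value if the matrix is not Hermitian. -/
noncomputable def eigVec (ρ : Matrix ι ι ℂ) (j : ι) : ι → ℂ :=
  if hρ : ρ.IsHermitian then fun k => (hρ.eigenvectorUnitary : Matrix ι ι ℂ) k j
  else 0

/-- The Moore–Penrose power `A^(r)` of a positive semidefinite matrix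
`A = ∑ⱼ μⱼ vⱼvⱼ†`, namely `∑_{j : μⱼ > 0} μⱼ^r vⱼvⱼ†`
(junk value if `A` is not Hermitian). -/
noncomputable def mpPow (A : Matrix ι ι ℂ) (r : ℝ) : Matrix ι ι ℂ :=
  if hA : A.IsHermitian then
    ∑ j, if 0 < hA.eigenvalues j then
      (hA.eigenvalues j ^ r) • Matrix.vecMulVec (eigVec A j) (star (eigVec A j))
    else 0
  else 0

/-- The collision relative entropy `D₂(ρ‖τ)`. -/
noncomputable def collisionRelEntropy (ρ τ : Matrix ι ι ℂ) : ℝ :=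
  Real.logb 2 (((mpPow τ (-(1/4)) * ρ * mpPow τ (-(1/4))) ^ 2).trace.re)

lemma vecMulVec_mul_vecMulVec (a b c d : ι → ℂ) :
    vecMulVec a b * vecMulVec c d = (b ⬝ᵥ c) • vecMulVec a d := by
  ext i k
  simp only [mul_apply, vecMulVec_apply, Matrix.smul_apply, dotProduct, smul_eq_mul, Finset.sum_mul]
  exact Finset.sum_congr rfl fun j _ => by ring

lemma mul_vecMulVec (A : Matrix ι ι ℂ) (b c : ι → ℂ) :
    A * vecMulVec b c = vecMulVec (A *ᵥ b) c := by
  ext i k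
  simp only [mul_apply, vecMulVec_apply, mulVec, dotProduct, Finset.sum_mul, mul_assoc]

lemma eigVec_eq {A : Matrix ι ι ℂ} (hA : A.IsHermitian) (j : ι) :
    eigVec A j = fun k => (hA.eigenvectorUnitary : Matrix ι ι ℂ) k j := by
  rw [eigVec, dif_pos hA]

lemma eigVec_orth {A : Matrix ι ι ℂ} (hA : A.IsHermitian) (j k : ι) :
    star (eigVec A j) ⬝ᵥ eigVec A k = if j = k then 1 else 0 := by
  have h := mem_unitaryGroup_iff'.mp hA.eigenvectorUnitary.2
  have h2 := congrFun (congrFun (congrArg (fun M => (M : Matrix ι ι ℂ)) h) j) k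
  simp only [mul_apply, conjTranspose_apply, one_apply] at h2
  simp only [eigVec_eq hA]
  simpa [dotProduct] using h2

lemma eigVec_complete {A : Matrix ι ι ℂ} (hA : A.IsHermitian) :
    ∑ j, vecMulVec (eigVec A j) (star (eigVec A j)) = 1 := by
  have h := mem_unitaryGroup_iff.mp hA.eigenvectorUnitary.2
  ext i k
  have h2 := congrFun (congrFun (congrArg (fun M => (M : Matrix ι ι ℂ)) h) i) k
  simp only [mul_apply, conjTranspose_apply, one_apply] at h2
  simp only [Matrix.sum_apply, vecMulVec_apply, eigVec_eq hA, Pi.star_apply, one_apply]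
  simpa using h2

lemma spectral_sum {A : Matrix ι ι ℂ} (hA : A.IsHermitian) :
    A = ∑ j, (hA.eigenvalues j) • vecMulVec (eigVec A j) (star (eigVec A j)) := by
  conv_lhs => rw [hA.spectral_theorem, Unitary.conjStarAlgAut_apply]
  ext i k
  simp only [Matrix.sum_apply, Matrix.smul_apply, vecMulVec_apply, eigVec_eq hA, Pi.star_apply]
  simp only [mul_apply, diagonal_apply, Function.comp_apply, Finset.mul_sum, Finset.sum_mul,
    conjTranspose_apply]
  rw [Finset.sum_comm]
  refine Finset.sum_congr rfl fun j _ => ?_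
  rw [Finset.sum_eq_single j]
  · simp [Complex.real_smul]; ring
  · intro b _ hb; simp [hb, Ne.symm hb]
  · simp

lemma mpPow_eq {A : Matrix ι ι ℂ} (hA : A.IsHermitian) (r : ℝ) :
    mpPow A r = ∑ j, (if 0 < hA.eigenvalues j then hA.eigenvalues j ^ r else 0) •
      vecMulVec (eigVec A j) (star (eigVec A j)) := by
  rw [mpPow, dif_pos hA]
  refine Finset.sum_congr rfl fun j _ => ?_
  split_ifs with h
  · rfl
  · rw [zero_smul]

section decomp
variable {κ : Type*} [Fintype κ] [DecidableEq κ]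

lemma pow_decomp (w : κ → ι → ℂ)
    (ho : ∀ j k, star (w j) ⬝ᵥ w k = if j = k then 1 else 0)
    (hc : ∑ j, vecMulVec (w j) (star (w j)) = 1)
    (ν : κ → ℝ) (n : ℕ) :
    (∑ j, (ν j) • vecMulVec (w j) (star (w j))) ^ n
      = ∑ j, (ν j ^ n) • vecMulVec (w j) (star (w j)) := by
  induction n with
  | zero => simpa using hc.symm
  | succ n ih =>
      rw [pow_succ, ih, Finset.sum_mul_sum]
      refine Finset.sum_congr rfl fun j _ => ?_
      rw [Finset.sum_eq_single j]
      · rw [smul_mul_assoc, mul_smul_comm, _root_.vecMulVec_mul_vecMulVec, ho, if_pos rfl, one_smul,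
          smul_smul, ← pow_succ]
      · intro b _ hb
        rw [smul_mul_assoc, mul_smul_comm, _root_.vecMulVec_mul_vecMulVec, ho, if_neg (Ne.symm hb), zero_smul,
          smul_zero, smul_zero]
      · simp
end decomp
section decomp2
variable {κ : Type*} [Fintype κ] [DecidableEq κ]

lemma eval_decomp (w : κ → ι → ℂ)
    (ho : ∀ j k, star (w j) ⬝ᵥ w k = if j = k then 1 else 0)
    (hc : ∑ j, vecMulVec (w j) (star (w j)) = 1)
    (ν : κ → ℝ) (p : Polynomial ℝ) (N : ℕ) (hN : p.natDegree < N) :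
    ∑ j, (p.eval (ν j)) • vecMulVec (w j) (star (w j))
      = ∑ i ∈ Finset.range N, p.coeff i •
          (∑ j, (ν j) • vecMulVec (w j) (star (w j))) ^ i := by
  have : ∀ i, (∑ j, (ν j) • vecMulVec (w j) (star (w j))) ^ i
      = ∑ j, (ν j ^ i) • vecMulVec (w j) (star (w j)) := pow_decomp w ho hc ν
  simp_rw [this, Finset.smul_sum, smul_smul]
  rw [Finset.sum_comm]
  refine Finset.sum_congr rfl fun j _ => ?_
  rw [← Finset.sum_smul, Polynomial.eval_eq_sum_range' hN]

lemma decomp_g {κ₂ : Type*} [Fintype κ₂] [DecidableEq κ₂]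
    (v : κ → ι → ℂ) (w : κ₂ → ι → ℂ)
    (hov : ∀ j k, star (v j) ⬝ᵥ v k = if j = k then 1 else 0)
    (hcv : ∑ j, vecMulVec (v j) (star (v j)) = 1)
    (how : ∀ j k, star (w j) ⬝ᵥ w k = if j = k then 1 else 0)
    (hcw : ∑ j, vecMulVec (w j) (star (w j)) = 1)
    (μ : κ → ℝ) (ν : κ₂ → ℝ)
    (hA : ∑ j, μ j • vecMulVec (v j) (star (v j))
        = ∑ k, ν k • vecMulVec (w k) (star (w k)))
    (g : ℝ → ℝ) :
    ∑ j, g (μ j) • vecMulVec (v j) (star (v j))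
      = ∑ k, g (ν k) • vecMulVec (w k) (star (w k)) := by
  classical
  set s : Finset ℝ := Finset.image μ Finset.univ ∪ Finset.image ν Finset.univ with hs
  set p := Lagrange.interpolate s id g with hp
  have hinj : Set.InjOn id (s : Set ℝ) := fun x _ y _ h => h
  have hμ : ∀ j, p.eval (μ j) = g (μ j) := fun j => by
    exact Lagrange.eval_interpolate_at_node g hinj
      (by simp [hs] : μ j ∈ s)
  have hν : ∀ k, p.eval (ν k) = g (ν k) := fun k => by
    exact Lagrange.eval_interpolate_at_node g hinj
      (by simp [hs] : ν k ∈ s)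
  calc ∑ j, g (μ j) • vecMulVec (v j) (star (v j))
      = ∑ j, (p.eval (μ j)) • vecMulVec (v j) (star (v j)) := by simp_rw [hμ]
    _ = ∑ i ∈ Finset.range (p.natDegree + 1), p.coeff i •
          (∑ j, μ j • vecMulVec (v j) (star (v j))) ^ i :=
        eval_decomp v hov hcv μ p _ (Nat.lt_succ_self _)
    _ = ∑ i ∈ Finset.range (p.natDegree + 1), p.coeff i •
          (∑ k, ν k • vecMulVec (w k) (star (w k))) ^ i := by rw [hA]
    _ = ∑ k, (p.eval (ν k)) • vecMulVec (w k) (star (w k)) :=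
        (eval_decomp w how hcw ν p _ (Nat.lt_succ_self _)).symm
    _ = ∑ k, g (ν k) • vecMulVec (w k) (star (w k)) := by simp_rw [hν]

lemma mpPow_of_decomp {A : Matrix ι ι ℂ} (hA : A.IsHermitian)
    (w : κ → ι → ℂ)
    (ho : ∀ j k, star (w j) ⬝ᵥ w k = if j = k then 1 else 0)
    (hc : ∑ j, vecMulVec (w j) (star (w j)) = 1)
    (ν : κ → ℝ)
    (hdec : A = ∑ k, ν k • vecMulVec (w k) (star (w k))) (r : ℝ) :
    mpPow A r = ∑ k, (if 0 < ν k then ν k ^ r else 0) •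
      vecMulVec (w k) (star (w k)) := by
  rw [mpPow_eq hA r]
  exact decomp_g (eigVec A) w (eigVec_orth hA) (eigVec_complete hA) ho hc _ ν
    (by rw [← spectral_sum hA, hdec]) (fun x => if 0 < x then x ^ r else 0)
end decomp2
lemma vecMulVec_star_isHermitian (a : ι → ℂ) : (vecMulVec a (star a)).IsHermitian := by
  ext i j
  simp only [conjTranspose_apply, vecMulVec_apply, Pi.star_apply, star_mul', star_star]
  ring

lemma sum_smul_vecMulVec_isHermitian {κ : Type*} [Fintype κ] (w : κ → ι → ℂ) (ν : κ → ℝ) :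
    (∑ k, ν k • vecMulVec (w k) (star (w k))).IsHermitian := by
  unfold Matrix.IsHermitian
  rw [conjTranspose_sum]
  refine Finset.sum_congr rfl fun k _ => ?_
  rw [conjTranspose_smul, star_trivial, vecMulVec_star_isHermitian]

lemma mpPow_isHermitian {A : Matrix ι ι ℂ} (hA : A.IsHermitian) (r : ℝ) :
    (mpPow A r).IsHermitian := by
  rw [mpPow_eq hA r]
  exact sum_smul_vecMulVec_isHermitian _ _

lemma mpPow_mul_mpPow {A : Matrix ι ι ℂ} (hA : A.IsHermitian) (a b : ℝ) :
    mpPow A a * mpPow A b = mpPow A (a + b) := by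
  rw [mpPow_eq hA a, mpPow_eq hA b, mpPow_eq hA (a + b), Finset.sum_mul_sum]
  refine Finset.sum_congr rfl fun j _ => ?_
  rw [Finset.sum_eq_single j]
  · rw [smul_mul_assoc, mul_smul_comm, _root_.vecMulVec_mul_vecMulVec, eigVec_orth hA, if_pos rfl,
      one_smul, smul_smul]
    congr 1
    split_ifs with h
    · rw [← Real.rpow_add h]
    · rw [mul_zero]
  · intro k _ hk
    rw [smul_mul_assoc, mul_smul_comm, _root_.vecMulVec_mul_vecMulVec, eigVec_orth hA,
      if_neg (Ne.symm hk), zero_smul, smul_zero, smul_zero]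
  · simp
lemma zero_vecMulVec (c : ι → ℂ) : vecMulVec (0 : ι → ℂ) c = 0 := by
  ext i j; simp [vecMulVec_apply]

lemma sum_mulVec' {κ : Type*} [Fintype κ] (f : κ → Matrix ι ι ℂ) (v : ι → ℂ) :
    (∑ k, f k) *ᵥ v = ∑ k, f k *ᵥ v := by
  ext i
  simp only [mulVec, dotProduct, Matrix.sum_apply, Finset.sum_apply, Finset.sum_mul]
  exact Finset.sum_comm

lemma dotProduct_sum' {κ : Type*} [Fintype κ] (v : ι → ℂ) (f : κ → ι → ℂ) :
    v ⬝ᵥ (∑ k, f k) = ∑ k, v ⬝ᵥ f k := by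
  simp only [dotProduct, Finset.sum_apply, Finset.mul_sum]
  exact Finset.sum_comm

lemma eigVec_eq_basis {A : Matrix ι ι ℂ} (hA : A.IsHermitian) (j : ι) :
    eigVec A j = ⇑(hA.eigenvectorBasis j) := by
  funext k
  rw [eigVec_eq hA]
  exact hA.eigenvectorUnitary_apply k j

/-- If `B` is PSD and `S - B`-ish domination via a sum, a zero-eigenvalue eigenvector of `S`
kills `B`. -/
lemma mulVec_eigVec_eq_zero {M : ℕ} {ρ : Fin M → Matrix ι ι ℂ}
    (hρ : ∀ m, (ρ m).PosSemidef) {S : Matrix ι ι ℂ} (hS : S = ∑ m, ρ m)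
    (hS' : S.PosSemidef) {j : ι} (hj : ¬ 0 < hS'.1.eigenvalues j) (m : Fin M) :
    ρ m *ᵥ eigVec S j = 0 := by
  have hμ : hS'.1.eigenvalues j = 0 :=
    le_antisymm (not_lt.mp hj) (hS'.eigenvalues_nonneg j)
  have hv : S *ᵥ eigVec S j = 0 := by
    rw [eigVec_eq_basis hS'.1, Matrix.IsHermitian.mulVec_eigenvectorBasis, hμ, zero_smul]
  have hsum : ∑ m, star (eigVec S j) ⬝ᵥ (ρ m *ᵥ eigVec S j) = 0 := by
    have : ∑ m, (ρ m *ᵥ eigVec S j) = S *ᵥ eigVec S j := by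
      nth_rewrite 2 [hS]
      rw [sum_mulVec']
    calc ∑ m, star (eigVec S j) ⬝ᵥ (ρ m *ᵥ eigVec S j)
        = star (eigVec S j) ⬝ᵥ (∑ m, ρ m *ᵥ eigVec S j) := by
          rw [dotProduct_sum']
      _ = 0 := by rw [this, hv, dotProduct_zero]
  have hterm : star (eigVec S j) ⬝ᵥ (ρ m *ᵥ eigVec S j) = 0 := by
    have h0 : ∀ i ∈ Finset.univ, (0:ℂ) ≤ star (eigVec S j) ⬝ᵥ (ρ i *ᵥ eigVec S j) :=
      fun i _ => (hρ i).dotProduct_mulVec_nonneg _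
    exact (Finset.sum_eq_zero_iff_of_nonneg h0).mp hsum m (Finset.mem_univ m)
  exact ((hρ m).dotProduct_mulVec_zero_iff _).mp hterm

lemma mul_mpPow_zero {M : ℕ} {ρ : Fin M → Matrix ι ι ℂ}
    (hρ : ∀ m, (ρ m).PosSemidef) {S : Matrix ι ι ℂ} (hS : S = ∑ m, ρ m)
    (hS' : S.PosSemidef) (m : Fin M) :
    ρ m * mpPow S 0 = ρ m := by
  have hterm : ∀ j, ρ m * vecMulVec (eigVec S j) (star (eigVec S j))
      = (if 0 < hS'.1.eigenvalues j then (1:ℝ) else 0) •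
          (ρ m * vecMulVec (eigVec S j) (star (eigVec S j))) := by
    intro j
    split_ifs with h
    · rw [one_smul]
    · rw [zero_smul, _root_.mul_vecMulVec, mulVec_eigVec_eq_zero hρ hS hS' h m, _root_.zero_vecMulVec]
  calc ρ m * mpPow S 0
      = ∑ j, (if 0 < hS'.1.eigenvalues j then (1:ℝ) else 0) •
          (ρ m * vecMulVec (eigVec S j) (star (eigVec S j))) := by
        rw [mpPow_eq hS'.1, Finset.mul_sum]
        refine Finset.sum_congr rfl fun j _ => ?_
        rw [mul_smul_comm]
        congr 2
        exact Real.rpow_zero _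
    _ = ∑ j, ρ m * vecMulVec (eigVec S j) (star (eigVec S j)) :=
        Finset.sum_congr rfl fun j _ => (hterm j).symm
    _ = ρ m := by rw [← Finset.mul_sum, eigVec_complete hS'.1, mul_one]

lemma mpPow_zero_mul {M : ℕ} {ρ : Fin M → Matrix ι ι ℂ}
    (hρ : ∀ m, (ρ m).PosSemidef) {S : Matrix ι ι ℂ} (hS : S = ∑ m, ρ m)
    (hS' : S.PosSemidef) (m : Fin M) :
    mpPow S 0 * ρ m = ρ m := by
  have h1 := mul_mpPow_zero hρ hS hS' m
  have hP := mpPow_isHermitian hS'.1 (0:ℝ)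
  have hρm := (hρ m).1
  calc mpPow S 0 * ρ m = (ρ m * mpPow S 0)ᴴ := by
        rw [conjTranspose_mul, hP.eq, hρm.eq]
    _ = (ρ m)ᴴ := by rw [h1]
    _ = ρ m := hρm.eq
lemma star_ite01 (c : Prop) [Decidable c] : star (if c then (1:ℂ) else 0) = if c then 1 else 0 := by
  split_ifs <;> simp

section kron
variable {n : Type*} [Fintype n] [DecidableEq n]

/-- `e_a ⊗ v_{p.2}` family on a product type. -/
def wExt (v : ι → ι → ℂ) (p : n × ι) : (n × ι) → ℂ :=
  fun q => (if q.1 = p.1 then 1 else 0) * v p.2 q.2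

lemma wExt_vecMulVec (v : ι → ι → ℂ) (p : n × ι) :
    vecMulVec (wExt v p) (star (wExt v p))
      = single p.1 p.1 1 ⊗ₖ vecMulVec (v p.2) (star (v p.2)) := by
  ext ⟨a, i⟩ ⟨b, i'⟩
  simp only [vecMulVec_apply, wExt, Pi.star_apply, star_mul', star_ite01,
    kroneckerMap_apply, single_apply]
  by_cases ha : a = p.1 <;> by_cases hb : b = p.1 <;>
    simp_all [eq_comm] <;> ring

lemma wExt_orth (v : ι → ι → ℂ)
    (ho : ∀ j k, star (v j) ⬝ᵥ v k = if j = k then 1 else 0) (p p' : n × ι) :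
    star (wExt v p) ⬝ᵥ wExt v p' = if p = p' then 1 else 0 := by
  have h := ho p.2 p'.2
  simp only [dotProduct, Pi.star_apply] at h
  calc star (wExt v p) ⬝ᵥ wExt v p'
      = ∑ a : n, ∑ i : ι, ((if a = p.1 then (1:ℂ) else 0) * (if a = p'.1 then 1 else 0))
          * (star (v p.2 i) * v p'.2 i) := by
        rw [dotProduct, Fintype.sum_prod_type]
        refine Finset.sum_congr rfl fun a _ => Finset.sum_congr rfl fun i _ => ?_
        simp only [wExt, Pi.star_apply, star_mul', star_ite01]
        ring
    _ = (∑ a : n, (if a = p.1 then (1:ℂ) else 0) * (if a = p'.1 then 1 else 0))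
          * (if p.2 = p'.2 then 1 else 0) := by
        rw [← h, Finset.sum_mul]
        refine Finset.sum_congr rfl fun a _ => ?_
        rw [Finset.mul_sum]
    _ = (if p.1 = p'.1 then (1:ℂ) else 0) * (if p.2 = p'.2 then 1 else 0) := by
        congr 1
        by_cases h1 : p.1 = p'.1
        · rw [if_pos h1, h1]
          rw [Finset.sum_eq_single p'.1] <;> simp_all
        · rw [if_neg h1]
          refine Finset.sum_eq_zero fun a _ => ?_
          split_ifs with h2 h3
          · exact absurd (h2 ▸ h3) h1
          · rw [mul_zero]
          · rw [zero_mul]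
          · rw [zero_mul]
    _ = if p = p' then 1 else 0 := by
        by_cases h1 : p.1 = p'.1 <;> by_cases h2 : p.2 = p'.2 <;>
          simp_all [Prod.ext_iff]

lemma sum_kronecker {κ : Type*} (s : Finset κ) (f : κ → Matrix n n ℂ) (B : Matrix ι ι ℂ) :
    (∑ x ∈ s, f x) ⊗ₖ B = ∑ x ∈ s, f x ⊗ₖ B := by
  ext ⟨a, i⟩ ⟨b, i'⟩
  simp only [kroneckerMap_apply, Matrix.sum_apply, Finset.sum_mul]

lemma one_eq_sum_std : (1 : Matrix n n ℂ) = ∑ a : n, single a a 1 := by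
  ext i j
  simp only [Matrix.sum_apply, single_apply, one_apply]
  rw [Finset.sum_eq_single i] <;> aesop

lemma kronecker_sum' {κ : Type*} (s : Finset κ) (B : Matrix n n ℂ) (f : κ → Matrix ι ι ℂ) :
    B ⊗ₖ (∑ x ∈ s, f x) = ∑ x ∈ s, B ⊗ₖ f x := by
  ext ⟨a, i⟩ ⟨b, i'⟩
  simp only [kroneckerMap_apply, Matrix.sum_apply, Finset.mul_sum]

lemma wExt_sum_smul (v : ι → ι → ℂ) (c : ι → ℝ) :
    ∑ p : n × ι, (c p.2) • vecMulVec (wExt v p) (star (wExt v p))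
      = (1 : Matrix n n ℂ) ⊗ₖ (∑ j, c j • vecMulVec (v j) (star (v j))) := by
  rw [Fintype.sum_prod_type]
  have key : ∀ a : n, ∑ j, (c j) • vecMulVec (wExt v (a, j)) (star (wExt v (a, j)))
      = single a a (1:ℂ) ⊗ₖ (∑ j, c j • vecMulVec (v j) (star (v j))) := by
    intro a
    rw [kronecker_sum']
    refine Finset.sum_congr rfl fun j _ => ?_
    rw [wExt_vecMulVec, ← kronecker_smul]
  simp_rw [key]
  rw [← sum_kronecker, ← one_eq_sum_std]

lemma wExt_complete (v : ι → ι → ℂ)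
    (hc : ∑ j, vecMulVec (v j) (star (v j)) = 1) :
    ∑ p : n × ι, vecMulVec (wExt v p) (star (wExt v p)) = 1 := by
  have := wExt_sum_smul (n := n) v (fun _ => (1:ℝ))
  simp only [one_smul] at this
  rw [this, hc, one_kronecker_one]
end kron

lemma real_smul_matrix {a b : Type*} (r : ℝ) (Z : Matrix a b ℂ) : r • Z = (r:ℂ) • Z := by
  ext i j; simp [Complex.real_smul]

lemma trace_mul_self_eq {B : Matrix ι ι ℂ} (hB : B.IsHermitian) :
    (B * B).trace = ((∑ i, ∑ j, Complex.normSq (B i j) : ℝ) : ℂ) := by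
  rw [trace]
  push_cast
  refine Finset.sum_congr rfl fun i _ => ?_
  rw [diag_apply, mul_apply]
  refine Finset.sum_congr rfl fun j _ => ?_
  have hji : B j i = star (B i j) := by
    conv_lhs => rw [← hB.eq, conjTranspose_apply]
  rw [hji, Complex.star_def, Complex.mul_conj]


theorem pgm_success_eq_collision (M : ℕ) (hM : 1 ≤ M)
    (ρ : Fin M → Matrix ι ι ℂ)
    (hρ : ∀ m, (ρ m).PosSemidef) (hρtr : ∀ m, (ρ m).trace = 1)
    (S : Matrix ι ι ℂ) (hS : S = ∑ m, ρ m)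
    -- the pretty good measurement
    (Λ : Fin M → Matrix ι ι ℂ)
    (hΛ : Λ = fun m => mpPow S (-(1/2)) * ρ m * mpPow S (-(1/2)))
    (σMB : Matrix (Fin M × ι) (Fin M × ι) ℂ)
    (hσMB : σMB = ((1 : ℝ) / M) • ∑ m, Matrix.single m m (1 : ℂ) ⊗ₖ ρ m)
    (σM : Matrix (Fin M) (Fin M) ℂ) (hσM : σM = ((1 : ℂ) / M) • 1)
    (σB : Matrix ι ι ℂ) (hσB : σB = ((1 : ℝ) / M) • S) :
    (1 / M : ℝ) * ∑ m, ((Λ m * ρ m).trace.re)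
      = (1 / M : ℝ) * (2 : ℝ) ^ collisionRelEntropy σMB (σM ⊗ₖ σB) := by
  have hM0 : (0:ℝ) < M := by exact_mod_cast hM
  have hS' : S.PosSemidef := by
    rw [hS]
    exact Finset.sum_induction ρ _ (fun a b ha hb => ha.add hb)
      Matrix.PosSemidef.zero (fun m _ => hρ m)
  have hSH : S.IsHermitian := hS'.1
  set T : Matrix ι ι ℂ := mpPow S (-(1/4)) with hTdef
  have hT : T.IsHermitian := mpPow_isHermitian hSH _
  have hTT : T * T = mpPow S (-(1/2)) := by
    rw [hTdef, mpPow_mul_mpPow hSH]; norm_num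
  -- step 1 : trace identity
  have h1 : ∀ m, ((T * ρ m * T) * (T * ρ m * T)).trace = (Λ m * ρ m).trace := by
    intro m
    calc ((T * ρ m * T) * (T * ρ m * T)).trace
        = (T * (ρ m * (T * T) * (ρ m * T))).trace := by
          simp only [Matrix.mul_assoc]
      _ = ((ρ m * (T * T) * (ρ m * T)) * T).trace := trace_mul_comm _ _
      _ = ((ρ m) * ((T * T) * (ρ m * (T * T)))).trace := by
          simp only [Matrix.mul_assoc]
      _ = (((T * T) * (ρ m * (T * T))) * ρ m).trace := trace_mul_comm _ _
      _ = (Λ m * ρ m).trace := by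
          simp only [hΛ]
          rw [← hTT]
          simp only [Matrix.mul_assoc]
  -- the eigenvector family on the product space
  set v : ι → ι → ℂ := eigVec S with hvdef
  set w : (Fin M × ι) → (Fin M × ι) → ℂ := wExt v with hwdef
  have hwo : ∀ p p', star (w p) ⬝ᵥ w p' = if p = p' then 1 else 0 :=
    wExt_orth v (eigVec_orth hSH)
  have hwc : ∑ p, vecMulVec (w p) (star (w p)) = 1 :=
    wExt_complete v (eigVec_complete hSH)
  set τ : Matrix (Fin M × ι) (Fin M × ι) ℂ := σM ⊗ₖ σB with hτdef
  -- decomposition of τ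
  have hτdec : τ = ∑ p : Fin M × ι,
      ((1/(M:ℝ)^2) * hSH.eigenvalues p.2) • vecMulVec (w p) (star (w p)) := by
    rw [hτdef, hσM, hσB, hwdef]
    rw [wExt_sum_smul v (fun j => (1/(M:ℝ)^2) * hSH.eigenvalues j)]
    have : ∑ j, ((1/(M:ℝ)^2) * hSH.eigenvalues j) • vecMulVec (v j) (star (v j))
        = (1/(M:ℝ)^2) • S := by
      conv_rhs => rw [spectral_sum hSH]
      rw [Finset.smul_sum]
      refine Finset.sum_congr rfl fun j _ => ?_
      rw [smul_smul]
    rw [this, smul_kronecker, kronecker_smul, real_smul_matrix, real_smul_matrix, smul_smul,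
      kronecker_smul]
    first
    | rfl
    | · congr 1
        push_cast
        ring
  have hτH : τ.IsHermitian := by
    rw [hτdec]; exact sum_smul_vecMulVec_isHermitian _ _
  -- Moore-Penrose power of τ
  have hτmp : mpPow τ (-(1/4)) = Real.sqrt M • ((1 : Matrix (Fin M) (Fin M) ℂ) ⊗ₖ T) := by
    rw [mpPow_of_decomp hτH w hwo hwc _ hτdec (-(1/4))]
    have hscal : ∀ x : ℝ, (if 0 < (1/(M:ℝ)^2) * x then ((1/(M:ℝ)^2) * x) ^ (-(1/4):ℝ) else 0)
        = Real.sqrt M * (if 0 < x then x ^ (-(1/4):ℝ) else 0) := by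
      intro x
      have hM2 : (0:ℝ) < 1/(M:ℝ)^2 := by positivity
      by_cases hx : 0 < x
      · rw [if_pos (by positivity), if_pos hx]
        rw [Real.mul_rpow hM2.le hx.le]
        congr 1
        have h2 : (1/(M:ℝ)^2) = (M:ℝ) ^ (-2:ℝ) := by
          rw [Real.rpow_neg hM0.le, one_div]
          congr 1
          rw [show ((2:ℝ)) = ((2:ℕ):ℝ) by norm_num, Real.rpow_natCast]
        rw [h2, ← Real.rpow_mul hM0.le, Real.sqrt_eq_rpow]
        norm_num
      · rw [if_neg (fun hcon => absurd hcon (by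
            have hx' := not_lt.mp hx
            have := mul_nonpos_of_nonneg_of_nonpos hM2.le hx'
            exact not_lt.mpr this)), if_neg hx, mul_zero]
    calc ∑ p : Fin M × ι, (if 0 < (1/(M:ℝ)^2) * hSH.eigenvalues p.2 then
            ((1/(M:ℝ)^2) * hSH.eigenvalues p.2) ^ (-(1/4):ℝ) else 0) •
            vecMulVec (w p) (star (w p))
        = ∑ p : Fin M × ι, (Real.sqrt M *
            (if 0 < hSH.eigenvalues p.2 then hSH.eigenvalues p.2 ^ (-(1/4):ℝ) else 0)) •
            vecMulVec (w p) (star (w p)) := by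
          refine Finset.sum_congr rfl fun p _ => ?_
          rw [hscal]
      _ = Real.sqrt M • ∑ p : Fin M × ι,
            (if 0 < hSH.eigenvalues p.2 then hSH.eigenvalues p.2 ^ (-(1/4):ℝ) else 0) •
            vecMulVec (w p) (star (w p)) := by
          rw [Finset.smul_sum]
          simp_rw [smul_smul]
      _ = Real.sqrt M • ((1 : Matrix (Fin M) (Fin M) ℂ) ⊗ₖ T) := by
          rw [hwdef, wExt_sum_smul v
            (fun j => if 0 < hSH.eigenvalues j then hSH.eigenvalues j ^ (-(1/4):ℝ) else 0)]
          rw [hTdef, mpPow_eq hSH]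
  -- step 3: compute P σMB P
  set m₀ : Fin M := ⟨0, hM⟩ with hm₀def
  set K : Matrix (Fin M × ι) (Fin M × ι) ℂ := (1 : Matrix (Fin M) (Fin M) ℂ) ⊗ₖ T with hKdef
  have hPσP : mpPow τ (-(1/4)) * σMB * mpPow τ (-(1/4))
      = ∑ m, single m m (1:ℂ) ⊗ₖ (T * ρ m * T) := by
    rw [hτmp, hσMB]
    simp only [smul_mul_assoc, mul_smul_comm, smul_smul]
    have hsc : Real.sqrt M * ((1:ℝ)/M * Real.sqrt M) = 1 := by
      rw [show Real.sqrt M * ((1:ℝ)/M * Real.sqrt M)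
          = (Real.sqrt M * Real.sqrt M)/M by ring,
        Real.mul_self_sqrt hM0.le]
      exact div_self hM0.ne'
    rw [hsc, one_smul, Finset.mul_sum, Finset.sum_mul]
    refine Finset.sum_congr rfl fun m _ => ?_
    rw [hKdef, ← mul_kronecker_mul, ← mul_kronecker_mul, Matrix.one_mul, Matrix.mul_one]
  -- step 4: square and trace
  have hsq : (∑ m, single m m (1:ℂ) ⊗ₖ (T * ρ m * T)) ^ 2
      = ∑ m, single m m (1:ℂ) ⊗ₖ ((T * ρ m * T) * (T * ρ m * T)) := by
    rw [sq, Finset.sum_mul_sum]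
    refine Finset.sum_congr rfl fun m _ => ?_
    rw [Finset.sum_eq_single m]
    · rw [← mul_kronecker_mul]
      simp
    · intro b _ hb
      rw [← mul_kronecker_mul]
      rw [Matrix.single_mul_single_of_ne (h := Ne.symm hb), zero_kronecker]
    · simp
  have htr : ((mpPow τ (-(1/4)) * σMB * mpPow τ (-(1/4))) ^ 2).trace
      = ∑ m, (Λ m * ρ m).trace := by
    rw [hPσP, hsq, trace_sum]
    refine Finset.sum_congr rfl fun m _ => ?_
    rw [trace_kronecker, ← h1 m]
    simp [Matrix.trace_single_eq_same]
  -- step 5: positivity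
  have hBH : ∀ m, (T * ρ m * T).IsHermitian := by
    intro m
    have hρH := (hρ m).1
    unfold Matrix.IsHermitian
    rw [conjTranspose_mul, conjTranspose_mul, hT.eq, hρH.eq, ← Matrix.mul_assoc]
  have hterm_re : ∀ m, ((T * ρ m * T) * (T * ρ m * T)).trace.re
      = ∑ i, ∑ j, Complex.normSq ((T * ρ m * T) i j) := by
    intro m
    rw [trace_mul_self_eq (hBH m), Complex.ofReal_re]
  have hnonneg : ∀ m, 0 ≤ ((T * ρ m * T) * (T * ρ m * T)).trace.re := by
    intro m
    rw [hterm_re]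
    exact Finset.sum_nonneg fun i _ => Finset.sum_nonneg fun j _ => Complex.normSq_nonneg _
  have hm0 : (0:ℝ) < ((T * ρ m₀ * T) * (T * ρ m₀ * T)).trace.re := by
    rw [hterm_re]
    have e2 : mpPow S 0 = mpPow S (1/4) * T := by
      rw [hTdef, mpPow_mul_mpPow hSH]; norm_num
    have e3 : mpPow S 0 = T * mpPow S (1/4) := by
      rw [hTdef, mpPow_mul_mpPow hSH]; norm_num
    have ecomm : mpPow S (1/4) * T = T * mpPow S (1/4) := e2.symm.trans e3
    have hBne : T * ρ m₀ * T ≠ 0 := by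
      intro h0
      have e0 : ρ m₀ = mpPow S 0 * (ρ m₀ * mpPow S 0) := by
        rw [mul_mpPow_zero hρ hS hS' m₀, mpPow_zero_mul hρ hS hS' m₀]
      have hρ0 : ρ m₀ = 0 := by
        calc ρ m₀ = mpPow S 0 * (ρ m₀ * mpPow S 0) := e0
          _ = mpPow S (1/4) * T * (ρ m₀ * (mpPow S (1/4) * T)) := by rw [e2]
          _ = mpPow S (1/4) * T * (ρ m₀ * (T * mpPow S (1/4))) := by
              nth_rewrite 2 [ecomm]
              rfl
          _ = mpPow S (1/4) * (T * ρ m₀ * T) * mpPow S (1/4) := by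
              simp only [Matrix.mul_assoc]
          _ = 0 := by rw [h0, Matrix.mul_zero, Matrix.zero_mul]
      have h1' := hρtr m₀
      rw [hρ0, trace_zero] at h1'
      exact zero_ne_one h1'
    have hij : ∃ i j, (T * ρ m₀ * T) i j ≠ 0 := by
      by_contra hall
      push_neg at hall
      refine hBne ?_
      ext i j
      simpa using hall i j
    obtain ⟨i, j, hij⟩ := hij
    refine Finset.sum_pos' (fun a _ => Finset.sum_nonneg fun b _ => Complex.normSq_nonneg _)
      ⟨i, Finset.mem_univ i, ?_⟩
    exact Finset.sum_pos' (fun b _ => Complex.normSq_nonneg _)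
      ⟨j, Finset.mem_univ j, Complex.normSq_pos.mpr hij⟩
  -- step 6: conclude
  have hXpos : 0 < ((mpPow τ (-(1/4)) * σMB * mpPow τ (-(1/4))) ^ 2).trace.re := by
    rw [htr, Complex.re_sum]
    refine Finset.sum_pos' (fun m _ => ?_) ⟨m₀, Finset.mem_univ _, ?_⟩
    · rw [← h1 m]; exact hnonneg m
    · rw [← h1 m₀]; exact hm0
  rw [collisionRelEntropy]
  rw [Real.rpow_logb (by norm_num) (by norm_num) hXpos]
  rw [htr, Complex.re_sum]
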